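/- Let n, m ≥ 1 and let π : ℝ^n → ℝ^m be a continuous map whose first coordinate function is π_1(x) = ‖x‖² = x_1² + ⋯ + x_n². If L ⊆ ℝ^m is a nonempty affine subspace with L ⊆ π(ℝ^n), then L consists of a single point. In particular, the image π(ℝ^n) contains no affine line. -/

import Mathlib

/-- Lemma 3.3 (generalized): if `π : ℝⁿ → ℝᵐ` is a continuous map whose first
coordinate function is `x ↦ ‖x‖² = x₁² + ⋯ + xₙ²`, then any nonempty affine
subspace `L ⊆ ℝᵐ` contained in the image of `π` is a single point; in particular
the image contains no affine line. -/
theorem orbit_space_line_free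
    (n m : ℕ) (hn : 1 ≤ n) (hm : 1 ≤ m)
    (π : (Fin n → ℝ) → (Fin m → ℝ)) (hcont : Continuous π)
    (hπ1 : ∀ x, π x ⟨0, hm⟩ = ∑ i, (x i) ^ 2)
    (L : AffineSubspace ℝ (Fin m → ℝ)) (hL : (L : Set (Fin m → ℝ)).Nonempty)
    (hLsub : (L : Set (Fin m → ℝ)) ⊆ Set.range π) :
    ∃ p, (L : Set (Fin m → ℝ)) = {p} := by
  obtain ⟨p, hp⟩ := hL
  set i0 : Fin m := ⟨0, hm⟩
  -- every point of L has nonnegative first coordinate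
  have hnonneg : ∀ q ∈ (L : Set (Fin m → ℝ)), 0 ≤ q i0 := by
    intro q hq
    obtain ⟨x, rfl⟩ := hLsub hq
    rw [hπ1]
    exact Finset.sum_nonneg fun i _ => sq_nonneg _
  have hdir : L.direction = ⊥ := by
    by_contra h
    obtain ⟨v, hv, hv0⟩ := Submodule.exists_mem_ne_zero_of_ne_bot h
    -- the whole line p + t•v lies in L
    have hline : ∀ t : ℝ, (t • v + p) ∈ (L : Set (Fin m → ℝ)) := by
      intro t
      have := AffineSubspace.vadd_mem_of_mem_direction (L.direction.smul_mem t hv) hp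
      simpa using this
    -- first coordinate of v is zero
    have hv0coord : v i0 = 0 := by
      by_contra hne
      have h1 := hnonneg _ (hline ((-(p i0 + 1) / v i0)))
      have : (((-(p i0 + 1) / v i0) • v + p)) i0 = -1 := by
        simp only [Pi.add_apply, Pi.smul_apply, smul_eq_mul]
        field_simp
        ring
      rw [this] at h1
      linarith
    set c : ℝ := p i0 with hc
    -- the set K of preimage candidates
    set K : Set (Fin n → ℝ) := {x | ∑ i, (x i) ^ 2 ≤ c} with hK
    have hKclosed : IsClosed K :=
      isClosed_le (by continuity) continuous_const
    have hKbdd : K ⊆ Metric.closedBall 0 (Real.sqrt c) := by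
      intro x hx
      rw [Metric.mem_closedBall, dist_zero_right]
      rw [pi_norm_le_iff_of_nonneg (Real.sqrt_nonneg c)]
      intro i
      have h1 : (x i) ^ 2 ≤ c := by
        refine le_trans ?_ hx
        exact Finset.single_le_sum (fun j _ => sq_nonneg (x j)) (Finset.mem_univ i)
      have := Real.sqrt_le_sqrt h1
      rwa [Real.sqrt_sq_eq_abs] at this
    have hKcompact : IsCompact K :=
      (isCompact_closedBall _ _).of_isClosed_subset hKclosed hKbdd
    have himg : IsCompact (π '' K) := hKcompact.image hcont
    obtain ⟨R, hR⟩ := himg.isBounded.subset_closedBall 0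
    -- every point on the line lies in π '' K
    have hlineK : ∀ t : ℝ, (t • v + p) ∈ π '' K := by
      intro t
      obtain ⟨x, hx⟩ := hLsub (hline t)
      refine ⟨x, ?_, hx⟩
      have h1 : π x i0 = (t • v + p) i0 := by rw [hx]
      rw [hπ1] at h1
      simp only [Pi.add_apply, Pi.smul_apply, smul_eq_mul, hv0coord, mul_zero, zero_add] at h1
      rw [hK]
      simp only [Set.mem_setOf_eq]
      rw [h1]
    -- derive a contradiction from unboundedness
    obtain ⟨j, hj⟩ := Function.ne_iff.mp hv0
    simp only [Pi.zero_apply] at hj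
    have hvj : 0 < |v j| := abs_pos.mpr hj
    have hR0 : 0 ≤ R := by
      have h0 := hR (hlineK 0)
      rw [Metric.mem_closedBall, dist_zero_right] at h0
      exact le_trans (norm_nonneg _) h0
    set t : ℝ := (R + |p j| + 1) / |v j| with ht
    have hmem := hR (hlineK t)
    rw [Metric.mem_closedBall, dist_zero_right] at hmem
    have h2 : |(t • v + p) j| ≤ R :=
      le_trans (norm_le_pi_norm (t • v + p) j) hmem
    have h3 : |t * v j| = R + |p j| + 1 := by
      rw [abs_mul]
      have htpos : 0 < t := div_pos (by linarith [abs_nonneg (p j)]) hvj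
      have : |t| = t := abs_of_pos htpos
      rw [this, ht]
      field_simp
    have h4 : |t * v j| - |p j| ≤ |t * v j + p j| := by
      have := abs_add_le (t * v j + p j) (-(p j))
      simp only [add_neg_cancel_right, abs_neg] at this
      linarith
    have h5 : (t • v + p) j = t * v j + p j := by simp
    rw [h5] at h2
    linarith
  refine ⟨p, ?_⟩
  ext q
  simp only [Set.mem_singleton_iff]
  constructor
  · intro hq
    have := AffineSubspace.vsub_mem_direction hq hp
    rw [hdir, Submodule.mem_bot] at this
    have h : q - p = 0 := this
    exact sub_eq_zero.mp h
  · rintro rfl; exact hp
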